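/- Let C be an (n×n) cost matrix and A > 0, and define the (n+1)×(n+1) extended matrix C̄ with C in the top-left block, A in the bottom-right entry, and zeros elsewhere. For 0 < s ≤ 1, the partial optimal transport value POT_s(μ_n, ν_n) = min over π in Π_s(u_n, u_n) of ⟨C, π⟩ equals min over π̄ in Π(ᾱ, ᾱ) of ⟨C̄, π̄⟩, where ᾱ = [u_n, 1−s] is the vector whose first n entries equal 1/n and last entry equals 1−s. Moreover, the restriction of an optimal π̄ to its first n rows and columns is an optimal partial transportation plan. -/

import Mathlib

open scoped BigOperators

/-- The set of partial transportation plans `Π_s(u_n, u_n)`. -/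
def partialPlans (n : ℕ) (s : ℝ) : Set (Matrix (Fin n) (Fin n) ℝ) :=
  {π | (∀ i j, 0 ≤ π i j) ∧ (∀ i, ∑ j, π i j ≤ 1 / n) ∧
       (∀ j, ∑ i, π i j ≤ 1 / n) ∧ ∑ i, ∑ j, π i j = s}

/-- The transportation cost `⟨C, π⟩`. -/
def otCost {n : ℕ} (C π : Matrix (Fin n) (Fin n) ℝ) : ℝ := ∑ i, ∑ j, C i j * π i j

/-- Extend a partial plan to an `(n+1)×(n+1)` plan by putting the row/column deficits
in the last column/row and zero in the corner. -/
noncomputable def extPlan {n : ℕ} (π : Matrix (Fin n) (Fin n) ℝ) :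
    Matrix (Fin (n+1)) (Fin (n+1)) ℝ :=
  fun i j =>
    if hi : (i : ℕ) < n then
      if hj : (j : ℕ) < n then π ⟨i, hi⟩ ⟨j, hj⟩ else 1 / n - ∑ k, π ⟨i, hi⟩ k
    else
      if hj : (j : ℕ) < n then 1 / n - ∑ k, π k ⟨j, hj⟩ else 0

lemma extPlan_tl {n : ℕ} (π : Matrix (Fin n) (Fin n) ℝ) (i j : Fin n) :
    extPlan π i.castSucc j.castSucc = π i j := by
  simp [extPlan, i.isLt, j.isLt]

lemma extPlan_right {n : ℕ} (π : Matrix (Fin n) (Fin n) ℝ) (i : Fin n) :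
    extPlan π i.castSucc (Fin.last n) = 1 / n - ∑ k, π i k := by
  simp [extPlan, i.isLt]

lemma extPlan_bot {n : ℕ} (π : Matrix (Fin n) (Fin n) ℝ) (j : Fin n) :
    extPlan π (Fin.last n) j.castSucc = 1 / n - ∑ k, π k j := by
  simp [extPlan, j.isLt]

lemma extPlan_corner {n : ℕ} (π : Matrix (Fin n) (Fin n) ℝ) :
    extPlan π (Fin.last n) (Fin.last n) = 0 := by
  simp [extPlan]

lemma otCost_nonneg {m : ℕ} (D q : Matrix (Fin m) (Fin m) ℝ)
    (hD : ∀ i j, 0 ≤ D i j) (hq : ∀ i j, 0 ≤ q i j) : 0 ≤ otCost D q :=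
  Finset.sum_nonneg fun i _ => Finset.sum_nonneg fun j _ => mul_nonneg (hD i j) (hq i j)

theorem stmt_0 (n : ℕ) (hn : 0 < n) (s : ℝ) (hs : 0 < s) (hs1 : s ≤ 1)
    (C : Matrix (Fin n) (Fin n) ℝ) (hC : ∀ i j, 0 ≤ C i j) (A : ℝ) (hA : 0 < A)
    (Cbar : Matrix (Fin (n + 1)) (Fin (n + 1)) ℝ)
    (hCbar : ∀ i j : Fin (n + 1), Cbar i j =
      if h1 : (i : ℕ) < n then (if h2 : (j : ℕ) < n then C ⟨i, h1⟩ ⟨j, h2⟩ else 0)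
      else (if (j : ℕ) < n then 0 else A))
    (αbar : Fin (n + 1) → ℝ)
    (hαbar : ∀ i : Fin (n + 1), αbar i = if (i : ℕ) < n then 1 / (n : ℝ) else 1 - s)
    (ExtPlans : Set (Matrix (Fin (n + 1)) (Fin (n + 1)) ℝ))
    (hExt : ExtPlans = {π | (∀ i j, 0 ≤ π i j) ∧ (∀ i, ∑ j, π i j = αbar i) ∧
      (∀ j, ∑ i, π i j = αbar j)}) :
    (sInf (otCost C '' partialPlans n s) = sInf (otCost Cbar '' ExtPlans)) ∧
    (∀ πbar ∈ ExtPlans, (∀ π' ∈ ExtPlans, otCost Cbar πbar ≤ otCost Cbar π') →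
      ((fun i j : Fin n => πbar i.castSucc j.castSucc) ∈ partialPlans n s ∧
        ∀ π' ∈ partialPlans n s,
          otCost C (fun i j : Fin n => πbar i.castSucc j.castSucc) ≤ otCost C π')) := by
  have hn' : (0:ℝ) < n := Nat.cast_pos.mpr hn
  have hCtl : ∀ i j : Fin n, Cbar i.castSucc j.castSucc = C i j := fun i j => by
    simp [hCbar, i.isLt, j.isLt]
  have hCr : ∀ i : Fin n, Cbar i.castSucc (Fin.last n) = 0 := fun i => by
    simp [hCbar, i.isLt]
  have hCb : ∀ j : Fin n, Cbar (Fin.last n) j.castSucc = 0 := fun j => by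
    simp [hCbar, j.isLt]
  have hCc : Cbar (Fin.last n) (Fin.last n) = A := by simp [hCbar]
  have hα1 : ∀ i : Fin n, αbar i.castSucc = 1 / n := fun i => by simp [hαbar, i.isLt]
  have hα2 : αbar (Fin.last n) = 1 - s := by simp [hαbar]
  have hsum1 : ∑ _i : Fin n, (1:ℝ)/n = 1 := by
    rw [Finset.sum_const, Finset.card_univ, Fintype.card_fin, nsmul_eq_mul]
    field_simp
  -- cost splitting
  have costsplit : ∀ p : Matrix (Fin (n+1)) (Fin (n+1)) ℝ,
      otCost Cbar p = otCost C (fun i j => p i.castSucc j.castSucc)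
        + A * p (Fin.last n) (Fin.last n) := by
    intro p
    have h1 : ∀ i : Fin n, ∑ j, Cbar i.castSucc j * p i.castSucc j
        = ∑ j : Fin n, C i j * p i.castSucc j.castSucc := by
      intro i
      rw [Fin.sum_univ_castSucc, hCr i]
      simp [hCtl]
    have h2 : ∑ j, Cbar (Fin.last n) j * p (Fin.last n) j
        = A * p (Fin.last n) (Fin.last n) := by
      rw [Fin.sum_univ_castSucc, hCc]
      simp [hCb]
    unfold otCost
    rw [Fin.sum_univ_castSucc, h2, Finset.sum_congr rfl fun i _ => h1 i]
  -- extension has the same cost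
  have extCost : ∀ π : Matrix (Fin n) (Fin n) ℝ, otCost Cbar (extPlan π) = otCost C π := by
    intro π
    rw [costsplit, extPlan_corner, mul_zero, add_zero]
    have : (fun i j => extPlan π i.castSucc j.castSucc) = π := by
      funext i j; exact extPlan_tl π i j
    rw [this]
  -- extension is a valid extended plan
  have extMem : ∀ π ∈ partialPlans n s, extPlan π ∈ ExtPlans := by
    rintro π ⟨h0, hr, hc, ht⟩
    rw [hExt]
    refine ⟨?_, ?_, ?_⟩
    · intro i j
      unfold extPlan
      split_ifs with hi hj hj
      · exact h0 _ _
      · exact sub_nonneg.mpr (hr _)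
      · exact sub_nonneg.mpr (hc _)
      · exact le_refl 0
    · intro i
      refine Fin.lastCases ?_ ?_ i
      · rw [hα2, Fin.sum_univ_castSucc, extPlan_corner, add_zero]
        have hcom : ∑ j : Fin n, ∑ k, π k j = s := by rw [Finset.sum_comm]; exact ht
        calc ∑ j : Fin n, extPlan π (Fin.last n) j.castSucc
            = ∑ j : Fin n, (1/n - ∑ k, π k j) := by
              exact Finset.sum_congr rfl fun j _ => extPlan_bot π j
          _ = (∑ _j : Fin n, (1:ℝ)/n) - ∑ j : Fin n, ∑ k, π k j := Finset.sum_sub_distrib _ _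
          _ = 1 - s := by rw [hsum1, hcom]
      · intro i
        rw [hα1, Fin.sum_univ_castSucc, extPlan_right]
        have : ∑ j : Fin n, extPlan π i.castSucc j.castSucc = ∑ j, π i j :=
          Finset.sum_congr rfl fun j _ => extPlan_tl π i j
        rw [this]; ring
    · intro j
      refine Fin.lastCases ?_ ?_ j
      · rw [hα2, Fin.sum_univ_castSucc, extPlan_corner, add_zero]
        calc ∑ i : Fin n, extPlan π i.castSucc (Fin.last n)
            = ∑ i : Fin n, (1/n - ∑ k, π i k) := by
              exact Finset.sum_congr rfl fun i _ => extPlan_right π i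
          _ = (∑ _i : Fin n, (1:ℝ)/n) - ∑ i : Fin n, ∑ k, π i k := Finset.sum_sub_distrib _ _
          _ = 1 - s := by rw [hsum1, ht]
      · intro j
        rw [hα1, Fin.sum_univ_castSucc, extPlan_bot]
        have : ∑ i : Fin n, extPlan π i.castSucc j.castSucc = ∑ i, π i j :=
          Finset.sum_congr rfl fun i _ => extPlan_tl π i j
        rw [this]; ring
  -- facts about the restriction of an extended plan
  have restrFacts : ∀ p, p ∈ ExtPlans →
      (∀ i j : Fin n, 0 ≤ p i.castSucc j.castSucc) ∧
      (∀ i : Fin n, ∑ j : Fin n, p i.castSucc j.castSucc ≤ 1/n) ∧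
      (∀ j : Fin n, ∑ i : Fin n, p i.castSucc j.castSucc ≤ 1/n) ∧
      (∑ i : Fin n, ∑ j : Fin n, p i.castSucc j.castSucc
        = s + p (Fin.last n) (Fin.last n)) := by
    intro p hp
    rw [hExt] at hp
    obtain ⟨h0, hr, hc⟩ := hp
    have hrow : ∀ i : Fin n, ∑ j : Fin n, p i.castSucc j.castSucc
        = 1/n - p i.castSucc (Fin.last n) := by
      intro i
      have := hr i.castSucc
      rw [Fin.sum_univ_castSucc, hα1] at this
      linarith
    have hcol : ∀ j : Fin n, ∑ i : Fin n, p i.castSucc j.castSucc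
        = 1/n - p (Fin.last n) j.castSucc := by
      intro j
      have := hc j.castSucc
      rw [Fin.sum_univ_castSucc, hα1] at this
      linarith
    have hlastcol : ∑ i : Fin n, p i.castSucc (Fin.last n)
        = 1 - s - p (Fin.last n) (Fin.last n) := by
      have := hc (Fin.last n)
      rw [Fin.sum_univ_castSucc, hα2] at this
      linarith
    refine ⟨fun i j => h0 _ _,
        fun i => by rw [hrow]; linarith [h0 i.castSucc (Fin.last n)],
        fun j => by rw [hcol]; linarith [h0 (Fin.last n) j.castSucc], ?_⟩
    calc ∑ i : Fin n, ∑ j : Fin n, p i.castSucc j.castSucc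
        = ∑ i : Fin n, (1/n - p i.castSucc (Fin.last n)) :=
          Finset.sum_congr rfl fun i _ => hrow i
      _ = (∑ _i : Fin n, (1:ℝ)/n) - ∑ i : Fin n, p i.castSucc (Fin.last n) :=
          Finset.sum_sub_distrib _ _
      _ = s + p (Fin.last n) (Fin.last n) := by rw [hsum1, hlastcol]; ring
  -- from any extended plan, a partial plan with no larger cost
  have toPartial : ∀ p ∈ ExtPlans, ∃ q ∈ partialPlans n s,
      otCost C q + A * p (Fin.last n) (Fin.last n) ≤ otCost Cbar p := by
    intro p hp
    obtain ⟨h0, hr, hc, ht⟩ := restrFacts p hp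
    have hc0 : 0 ≤ p (Fin.last n) (Fin.last n) := by
      rw [hExt] at hp; exact hp.1 _ _
    set c := p (Fin.last n) (Fin.last n) with hcdef
    have hsc : 0 < s + c := by linarith
    set σ := s / (s + c) with hσdef
    have hσ0 : 0 ≤ σ := div_nonneg hs.le hsc.le
    have hσ1 : σ ≤ 1 := (div_le_one hsc).mpr (by linarith)
    refine ⟨fun i j => σ * p i.castSucc j.castSucc, ⟨?_, ?_, ?_, ?_⟩, ?_⟩
    · exact fun i j => mul_nonneg hσ0 (h0 i j)
    · intro i
      rw [← Finset.mul_sum]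
      have hr0 : 0 ≤ ∑ j : Fin n, p i.castSucc j.castSucc :=
        Finset.sum_nonneg fun j _ => h0 i j
      calc σ * ∑ j : Fin n, p i.castSucc j.castSucc
          ≤ 1 * ∑ j : Fin n, p i.castSucc j.castSucc :=
            mul_le_mul_of_nonneg_right hσ1 hr0
        _ = ∑ j : Fin n, p i.castSucc j.castSucc := one_mul _
        _ ≤ 1/n := hr i
    · intro j
      rw [← Finset.mul_sum]
      have hr0 : 0 ≤ ∑ i : Fin n, p i.castSucc j.castSucc :=
        Finset.sum_nonneg fun i _ => h0 i j
      calc σ * ∑ i : Fin n, p i.castSucc j.castSucc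
          ≤ 1 * ∑ i : Fin n, p i.castSucc j.castSucc :=
            mul_le_mul_of_nonneg_right hσ1 hr0
        _ = ∑ i : Fin n, p i.castSucc j.castSucc := one_mul _
        _ ≤ 1/n := hc j
    · simp only [← Finset.mul_sum]
      rw [ht, hσdef, div_mul_cancel₀ s hsc.ne']
    · have hq : otCost C (fun i j => σ * p i.castSucc j.castSucc)
          = σ * otCost C (fun i j => p i.castSucc j.castSucc) := by
        unfold otCost
        rw [Finset.mul_sum]
        refine Finset.sum_congr rfl fun i _ => ?_
        rw [Finset.mul_sum]
        exact Finset.sum_congr rfl fun j _ => by ring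
      have hX0 : 0 ≤ otCost C (fun i j => p i.castSucc j.castSucc) :=
        otCost_nonneg _ _ hC h0
      rw [hq, costsplit p]
      nlinarith [mul_nonneg (sub_nonneg.mpr hσ1) hX0]
  -- nonemptiness and bounds
  have hS_ne : (partialPlans n s).Nonempty := by
    refine ⟨fun _ _ => s / (n*n), fun i j => ?_, fun i => ?_, fun j => ?_, ?_⟩
    · positivity
    · rw [Finset.sum_const, Finset.card_univ, Fintype.card_fin, nsmul_eq_mul]
      rw [show (n:ℝ) * (s / (n*n)) = s / n by field_simp, div_le_div_iff₀ hn' hn']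
      nlinarith
    · rw [Finset.sum_const, Finset.card_univ, Fintype.card_fin, nsmul_eq_mul]
      rw [show (n:ℝ) * (s / (n*n)) = s / n by field_simp, div_le_div_iff₀ hn' hn']
      nlinarith
    · simp only [Finset.sum_const, Finset.card_univ, Fintype.card_fin, nsmul_eq_mul]
      field_simp
  have hCbar0 : ∀ i j, 0 ≤ Cbar i j := by
    intro i j
    rw [hCbar]
    split_ifs with h1 h2 h3
    · exact hC _ _
    · exact le_refl 0
    · exact le_refl 0
    · exact hA.le
  have bddS : BddBelow (otCost C '' partialPlans n s) := by
    refine ⟨0, ?_⟩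
    rintro x ⟨q, hq, rfl⟩
    exact otCost_nonneg _ _ hC hq.1
  have bddT : BddBelow (otCost Cbar '' ExtPlans) := by
    refine ⟨0, ?_⟩
    rintro x ⟨p, hp, rfl⟩
    rw [hExt] at hp
    exact otCost_nonneg _ _ hCbar0 hp.1
  have hT_ne : (otCost Cbar '' ExtPlans).Nonempty := by
    obtain ⟨q, hq⟩ := hS_ne
    exact ⟨otCost Cbar (extPlan q), extPlan q, extMem q hq, rfl⟩
  constructor
  · apply le_antisymm
    · refine le_csInf hT_ne ?_
      rintro b ⟨p, hp, rfl⟩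
      obtain ⟨q, hq, hle⟩ := toPartial p hp
      have hc0 : 0 ≤ p (Fin.last n) (Fin.last n) := by
        rw [hExt] at hp; exact hp.1 _ _
      refine csInf_le_of_le bddS ⟨q, hq, rfl⟩ ?_
      nlinarith [mul_nonneg hA.le hc0]
    · refine le_csInf (hS_ne.image _) ?_
      rintro b ⟨q, hq, rfl⟩
      exact csInf_le_of_le bddT ⟨extPlan q, extMem q hq, rfl⟩ (extCost q).le
  · intro pbar hpbar hopt
    obtain ⟨h0, hr, hc, ht⟩ := restrFacts pbar hpbar
    have hc0 : 0 ≤ pbar (Fin.last n) (Fin.last n) := by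
      rw [hExt] at hpbar; exact hpbar.1 _ _
    have hczero : pbar (Fin.last n) (Fin.last n) = 0 := by
      by_contra h
      have hcpos : 0 < pbar (Fin.last n) (Fin.last n) := lt_of_le_of_ne hc0 (Ne.symm h)
      obtain ⟨q, hq, hle⟩ := toPartial pbar hpbar
      have h2 := hopt (extPlan q) (extMem q hq)
      rw [extCost] at h2
      nlinarith [mul_pos hA hcpos]
    have hmem : (fun i j : Fin n => pbar i.castSucc j.castSucc) ∈ partialPlans n s := by
      exact ⟨h0, hr, hc, by rw [ht, hczero, add_zero]⟩
    refine ⟨hmem, ?_⟩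
    intro π' hπ'
    have h1 := hopt (extPlan π') (extMem π' hπ')
    rw [extCost] at h1
    have h2 := costsplit pbar
    rw [hczero, mul_zero, add_zero] at h2
    linarith
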